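/- Let f ∈ C¹[0,1] and λ ∈ [−1,1]. Then for every n ≥ 2 and every x ∈ [0,1], |B_{n,λ}(f;x) − f(x)| ≤ |β_n(x)| · |f′(x)| + 2 √(α_n(x)) · ω( f′, √(α_n(x)) ), where β_n(x) = B_{n,λ}(t−x;x), α_n(x) = B_{n,λ}((t−x)²;x), and ω(g,δ) = sup{ |g(t) − g(s)| : s,t ∈ [0,1], |t−s| ≤ δ } is the usual modulus of continuity. -/

import Mathlib

open Finset Filter

/-- Bernstein basis polynomial `b_{n,i}(x) = C(n,i) x^i (1-x)^(n-i)`. -/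
noncomputable def bern (n i : ℕ) (x : ℝ) : ℝ :=
  (n.choose i : ℝ) * x ^ i * (1 - x) ^ (n - i)

/-- Bézier basis `b̃_{n,i}(λ; x)` with shape parameter `lam`. -/
noncomputable def bez (n : ℕ) (lam x : ℝ) (i : ℕ) : ℝ :=
  if i = 0 then bern n 0 x - lam / ((n : ℝ) + 1) * bern (n + 1) 1 x
  else if i = n then bern n n x - lam / ((n : ℝ) + 1) * bern (n + 1) n x
  else bern n i x + lam * (((n : ℝ) - 2 * (i : ℝ) + 1) / ((n : ℝ) ^ 2 - 1) * bern (n + 1) i x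
    - ((n : ℝ) - 2 * (i : ℝ) - 1) / ((n : ℝ) ^ 2 - 1) * bern (n + 1) (i + 1) x)

/-- The λ-Bernstein operator `B_{n,λ}(f; x) = ∑_{i=0}^n f(i/n) b̃_{n,i}(λ; x)`. -/
noncomputable def lB (n : ℕ) (lam : ℝ) (f : ℝ → ℝ) (x : ℝ) : ℝ :=
  ∑ i ∈ Finset.range (n + 1), f ((i : ℝ) / (n : ℝ)) * bez n lam x i

/-- Usual modulus of continuity of `g` on `[0,1]`. -/
noncomputable def modCont (g : ℝ → ℝ) (δ : ℝ) : ℝ :=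
  sSup {y | ∃ s ∈ Set.Icc (0 : ℝ) 1, ∃ t ∈ Set.Icc (0 : ℝ) 1, |t - s| ≤ δ ∧ y = |g t - g s|}

lemma bern_nonneg (n i : ℕ) {x : ℝ} (h0 : 0 ≤ x) (h1 : x ≤ 1) : 0 ≤ bern n i x := by
  unfold bern
  have : (0:ℝ) ≤ 1 - x := by linarith
  positivity

lemma bern_succ_left (n i : ℕ) (hi : i ≤ n) (x : ℝ) :
    ((n:ℝ) + 1 - i) * bern (n+1) i x = ((n:ℝ)+1) * ((1 - x) * bern n i x) := by
  unfold bern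
  have h1 : n + 1 - i = (n - i) + 1 := by omega
  have h2 : ((n+1).choose i : ℝ) * ((n:ℝ) + 1 - i) = ((n:ℝ)+1) * (n.choose i : ℝ) := by
    have hc := congrArg (Nat.cast : ℕ → ℝ) (Nat.choose_mul_succ_eq n i)
    push_cast [Nat.cast_sub (by omega : i ≤ n + 1)] at hc
    linarith
  rw [h1, pow_succ]
  linear_combination (x ^ i * ((1 - x) ^ (n - i) * (1 - x))) * h2

lemma bern_succ_right (n i : ℕ) (hi : i ≤ n) (x : ℝ) :
    ((i:ℝ) + 1) * bern (n+1) (i+1) x = ((n:ℝ)+1) * (x * bern n i x) := by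
  unfold bern
  have h2 : (((n+1).choose (i+1)) : ℝ) * ((i:ℝ) + 1) = ((n:ℝ)+1) * (n.choose i : ℝ) := by
    have hc := congrArg (Nat.cast : ℕ → ℝ) (Nat.add_one_mul_choose_eq n i)
    push_cast at hc
    linarith
  have h1 : n + 1 - (i + 1) = n - i := by omega
  rw [h1, pow_succ]
  linear_combination (x ^ i * x * (1 - x) ^ (n - i)) * h2

set_option maxHeartbeats 1000000 in
lemma bez_nonneg (n : ℕ) (hn : 2 ≤ n) {lam x : ℝ} (hl1 : -1 ≤ lam) (hl2 : lam ≤ 1)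
    (h0 : 0 ≤ x) (h1 : x ≤ 1) {i : ℕ} (hi : i ≤ n) : 0 ≤ bez n lam x i := by
  have hN : (2:ℝ) ≤ (n:ℝ) := by exact_mod_cast hn
  have hx' : (0:ℝ) ≤ 1 - x := by linarith
  have hNne : ((n:ℝ) + 1) ≠ 0 := by positivity
  rcases eq_or_ne i 0 with rfl | hi0
  · have eb0 : bern n 0 x = (1-x)^n := by simp [bern]
    have eb1 : bern (n+1) 1 x = ((n:ℝ)+1) * (x * (1-x)^n) := by
      simp [bern, Nat.choose_one_right]; ring
    have e : bez n lam x 0 = (1-x)^n * (1 - lam * x) := by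
      rw [bez, if_pos rfl, eb0, eb1]; field_simp
    have h2 : 0 ≤ 1 - lam * x := by nlinarith
    rw [e]; positivity
  rcases eq_or_ne i n with rfl | hin
  · have eb0 : bern i i x = x^i := by simp [bern]
    have eb1 : bern (i+1) i x = ((i:ℝ)+1) * (x^i * (1-x)) := by
      simp [bern, Nat.choose_succ_self_right]; ring
    have e : bez i lam x i = x^i * (1 - lam * (1 - x)) := by
      rw [bez, if_neg hi0, if_pos rfl, eb0, eb1]; field_simp
    have h2 : 0 ≤ 1 - lam * (1 - x) := by nlinarith
    rw [e]; positivity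
  -- middle case
  have hi1 : 1 ≤ i := Nat.one_le_iff_ne_zero.2 hi0
  have hin' : i + 1 ≤ n := by omega
  have hI1 : (1:ℝ) ≤ (i:ℝ) := by exact_mod_cast hi1
  have hI2 : (i:ℝ) + 1 ≤ (n:ℝ) := by exact_mod_cast hin'
  set N := (n:ℝ) with hNdef
  set I := (i:ℝ) with hIdef
  have hd1 : (0:ℝ) < N + 1 - I := by linarith
  have hd2 : (0:ℝ) < I + 1 := by linarith
  have hd3 : (0:ℝ) < N^2 - 1 := by nlinarith
  have f1 := bern_succ_left n i hi x
  have f2 := bern_succ_right n i hi x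
  have e1 : bern (n+1) i x = (N+1) * ((1-x) * bern n i x) / (N + 1 - I) :=
    (eq_div_iff (ne_of_gt hd1)).2 (by linarith [f1])
  have e2 : bern (n+1) (i+1) x = (N+1) * (x * bern n i x) / (I + 1) :=
    (eq_div_iff (ne_of_gt hd2)).2 (by linarith [f2])
  have key : bez n lam x i = bern n i x *
      ((N^2-1)*(N+1-I)*(I+1)
        + lam*(N+1)*((N-2*I+1)*(1-x)*(I+1) - (N-2*I-1)*(x*(N+1-I))))
      / ((N^2-1)*(N+1-I)*(I+1)) := by
    rw [bez, if_neg hi0, if_neg hin, e1, e2, ← hNdef, ← hIdef]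
    field_simp [hd1.ne', hd2.ne', hd3.ne']
  rw [key]
  have hb := bern_nonneg n i h0 h1
  -- Q ≥ 0
  have hAp : 0 ≤ (N-1)*(N+1-I) + (N-2*I+1) := by nlinarith
  have hAm : 0 ≤ (N-1)*(N+1-I) - (N-2*I+1) := by nlinarith
  have hBp : 0 ≤ (N-1)*(I+1) - (N-2*I-1) := by nlinarith
  have hBm : 0 ≤ (N-1)*(I+1) + (N-2*I-1) := by nlinarith
  have h1b : 0 ≤ (N-1)*(N+1-I) + lam*(N-2*I+1) := by
    nlinarith [mul_nonneg (by linarith : (0:ℝ) ≤ 1 + lam) hAp,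
               mul_nonneg (by linarith : (0:ℝ) ≤ 1 - lam) hAm]
  have h2b : 0 ≤ (N-1)*(I+1) - lam*(N-2*I-1) := by
    nlinarith [mul_nonneg (by linarith : (0:ℝ) ≤ 1 - lam) hBp,
               mul_nonneg (by linarith : (0:ℝ) ≤ 1 + lam) hBm]
  have hQ : 0 ≤ (N^2-1)*(N+1-I)*(I+1)
        + lam*(N+1)*((N-2*I+1)*(1-x)*(I+1) - (N-2*I-1)*(x*(N+1-I))) := by
    have t1 : 0 ≤ (1-x)*(I+1) * ((N-1)*(N+1-I) + lam*(N-2*I+1)) :=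
      mul_nonneg (mul_nonneg hx' (le_of_lt hd2)) h1b
    have t2 : 0 ≤ x*(N+1-I) * ((N-1)*(I+1) - lam*(N-2*I-1)) :=
      mul_nonneg (mul_nonneg h0 (le_of_lt hd1)) h2b
    have hq : (N^2-1)*(N+1-I)*(I+1)
        + lam*(N+1)*((N-2*I+1)*(1-x)*(I+1) - (N-2*I-1)*(x*(N+1-I)))
        = (N+1) * ((1-x)*(I+1) * ((N-1)*(N+1-I) + lam*(N-2*I+1))
            + x*(N+1-I) * ((N-1)*(I+1) - lam*(N-2*I-1))) := by ring
    rw [hq]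
    exact mul_nonneg (by linarith) (add_nonneg t1 t2)
  have hD : 0 < (N^2-1)*(N+1-I)*(I+1) := mul_pos (mul_pos hd3 hd1) hd2
  exact div_nonneg (mul_nonneg hb hQ) (le_of_lt hD)

lemma sum_bern (n : ℕ) (x : ℝ) : ∑ i ∈ Finset.range (n+1), bern n i x = 1 := by
  have h : ∑ i ∈ Finset.range (n+1), bern n i x = (x + (1-x))^n := by
    rw [add_pow]
    exact Finset.sum_congr rfl fun i _ => by unfold bern; ring
  rw [h]
  norm_num

lemma sum_bez (n : ℕ) (hn : 2 ≤ n) (lam x : ℝ) :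
    ∑ i ∈ Finset.range (n+1), bez n lam x i = 1 := by
  have hN : (2:ℝ) ≤ (n:ℝ) := by exact_mod_cast hn
  have hN1 : ((n:ℝ) + 1) ≠ 0 := by positivity
  have hN2 : ((n:ℝ)^2 - 1) ≠ 0 := by nlinarith
  set G : ℕ → ℝ := fun j => ((n:ℝ) - 2*(j:ℝ) + 1)/((n:ℝ)^2-1) * bern (n+1) j x with hG
  set D : ℕ → ℝ := fun i => if i = 0 then -(G 1) else if i = n then G n else G i - G (i+1)
    with hD
  have hbez : ∀ i ∈ Finset.range (n+1), bez n lam x i = bern n i x + lam * D i := by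
    intro i _
    rcases eq_or_ne i 0 with rfl | hi0
    · simp only [bez, D, if_pos rfl, hG]
      push_cast
      field_simp
      ring
    rcases eq_or_ne i n with rfl | hin
    · simp only [bez, D, if_neg hi0, if_pos rfl, hG]
      push_cast
      field_simp
      ring
    · simp only [bez, D, if_neg hi0, if_neg hin, hG]
      push_cast
      ring
  rw [Finset.sum_congr rfl hbez, Finset.sum_add_distrib, sum_bern, ← Finset.mul_sum]
  have hsum : ∑ i ∈ Finset.range (n+1), D i = 0 := by
    obtain ⟨m, rfl⟩ : ∃ m, n = m + 2 := ⟨n - 2, by omega⟩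
    rw [Finset.sum_range_succ, Finset.sum_range_succ']
    have h1 : ∀ j ∈ Finset.range (m+1), D (j+1) = G (j+1) - G (j+2) := by
      intro j hj
      rw [Finset.mem_range] at hj
      simp only [hD]
      rw [if_neg (by omega), if_neg (by omega)]
    rw [Finset.sum_congr rfl h1, Finset.sum_range_sub' (fun j => G (j+1))]
    have hD0 : D 0 = -(G 1) := if_pos rfl
    have hDn : D (m+2) = G (m+2) := by
      simp [hD]
    rw [hD0, hDn]
    ring
  rw [hsum, mul_zero, add_zero]


lemma modCont_bddAbove (g : ℝ → ℝ) (hg : ContinuousOn g (Set.Icc 0 1)) (δ : ℝ) :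
    BddAbove {y | ∃ s ∈ Set.Icc (0 : ℝ) 1, ∃ t ∈ Set.Icc (0 : ℝ) 1, |t - s| ≤ δ ∧ y = |g t - g s|} := by
  obtain ⟨M, hM⟩ := isCompact_Icc.exists_bound_of_continuousOn hg
  refine ⟨2*M, ?_⟩
  rintro y ⟨s, hs, t, ht, -, rfl⟩
  have h1 := hM s hs
  have h2 := hM t ht
  rw [Real.norm_eq_abs] at h1 h2
  calc |g t - g s| ≤ |g t| + |g s| := abs_sub _ _
    _ ≤ 2 * M := by linarith

lemma modCont_ge (g : ℝ → ℝ) (hg : ContinuousOn g (Set.Icc 0 1)) {δ : ℝ}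
    {s t : ℝ} (hs : s ∈ Set.Icc (0:ℝ) 1) (ht : t ∈ Set.Icc (0:ℝ) 1) (h : |t - s| ≤ δ) :
    |g t - g s| ≤ modCont g δ :=
  le_csSup (modCont_bddAbove g hg δ) ⟨s, hs, t, ht, h, rfl⟩

lemma modCont_nonneg (g : ℝ → ℝ) (hg : ContinuousOn g (Set.Icc 0 1)) {δ : ℝ} (hδ : 0 ≤ δ) :
    0 ≤ modCont g δ := by
  have := modCont_ge g hg (Set.left_mem_Icc.2 zero_le_one) (Set.left_mem_Icc.2 zero_le_one)
    (by simpa using hδ)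
  simpa using this

lemma omega_chain (g : ℝ → ℝ) (hg : ContinuousOn g (Set.Icc 0 1)) {δ : ℝ} (hδ : 0 < δ)
    {s x : ℝ} (hs : s ∈ Set.Icc (0:ℝ) 1) (hx : x ∈ Set.Icc (0:ℝ) 1) :
    |g s - g x| ≤ (1 + |s - x| / δ) * modCont g δ := by
  have hω := modCont_nonneg g hg hδ.le
  rcases eq_or_ne s x with rfl | hne
  · simp
    positivity
  have hc : 0 < |s - x| / δ := div_pos (abs_pos.2 (sub_ne_zero.2 hne)) hδ
  set c := |s - x| / δ with hcdef
  set m := ⌈c⌉₊ with hm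
  have hm1 : 0 < m := Nat.ceil_pos.2 hc
  have hmR : (0:ℝ) < m := by exact_mod_cast hm1
  set p : ℕ → ℝ := fun j => x + j * (s - x) / m with hp
  have hp0 : p 0 = x := by simp [hp]
  have hpm : p m = s := by
    simp only [hp]
    field_simp
    ring
  have hmem : ∀ j ≤ m, p j ∈ Set.Icc (0:ℝ) 1 := by
    intro j hj
    have ht0 : (0:ℝ) ≤ (j:ℝ) / m := by positivity
    have ht1 : (j:ℝ) / m ≤ 1 := by
      rw [div_le_one hmR]
      exact_mod_cast hj
    have hpe : p j = x + ((j:ℝ)/m) * (s - x) := by simp [hp]; ring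
    rw [hpe]
    constructor
    · nlinarith [hx.1, hx.2, hs.1, hs.2]
    · nlinarith [hx.1, hx.2, hs.1, hs.2]
  have hstep : ∀ j, |p (j+1) - p j| ≤ δ := by
    intro j
    have he : p (j+1) - p j = (s - x) / m := by
      simp only [hp]
      push_cast
      ring
    rw [he, abs_div, abs_of_pos hmR, div_le_iff₀ hmR]
    have := Nat.le_ceil c
    rw [hcdef] at this
    calc |s - x| = (|s - x| / δ) * δ := by field_simp
      _ ≤ (m:ℝ) * δ := by
          apply mul_le_mul_of_nonneg_right _ hδ.le
          exact this
      _ = δ * m := by ring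
  have htel : g s - g x = ∑ j ∈ Finset.range m, (g (p (j+1)) - g (p j)) := by
    rw [Finset.sum_range_sub (fun j => g (p j)), hp0, hpm]
  calc |g s - g x| = |∑ j ∈ Finset.range m, (g (p (j+1)) - g (p j))| := by rw [htel]
    _ ≤ ∑ j ∈ Finset.range m, |g (p (j+1)) - g (p j)| := Finset.abs_sum_le_sum_abs _ _
    _ ≤ ∑ j ∈ Finset.range m, modCont g δ := by
        apply Finset.sum_le_sum
        intro j hj
        rw [Finset.mem_range] at hj
        exact modCont_ge g hg (hmem j (by omega)) (hmem (j+1) (by omega)) (hstep j)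
    _ = (m:ℝ) * modCont g δ := by rw [Finset.sum_const, Finset.card_range]; simp
    _ ≤ (1 + c) * modCont g δ := by
        apply mul_le_mul_of_nonneg_right _ hω
        have := Nat.ceil_lt_add_one hc.le
        rw [← hcdef] at *
        linarith [this]
  -- done? goal is (1 + |s-x|/δ) * ω which is (1+c)*ω

lemma taylor_bound (f f' : ℝ → ℝ)
    (hderiv : ∀ x ∈ Set.Icc (0 : ℝ) 1, HasDerivAt f (f' x) x)
    (hf' : ContinuousOn f' (Set.Icc 0 1)) {δ : ℝ} (hδ : 0 < δ)
    {x t : ℝ} (hx : x ∈ Set.Icc (0:ℝ) 1) (ht : t ∈ Set.Icc (0:ℝ) 1) :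
    |f t - f x - f' x * (t - x)| ≤ (|t - x| + (t - x)^2 / δ) * modCont f' δ := by
  have hω := modCont_nonneg f' hf' hδ.le
  rcases eq_or_ne t x with rfl | hne
  · simp
  have hkey : ∃ ξ ∈ Set.Icc (0:ℝ) 1, |ξ - x| ≤ |t - x| ∧ f t - f x = f' ξ * (t - x) := by
    rcases lt_or_gt_of_ne hne with hlt | hgt
    · -- t < x
      have hsub : Set.Icc t x ⊆ Set.Icc (0:ℝ) 1 := Set.Icc_subset_Icc ht.1 hx.2
      obtain ⟨ξ, hξ, hsl⟩ := exists_hasDerivAt_eq_slope f f' hlt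
        (fun y hy => ((hderiv y (hsub hy)).continuousAt).continuousWithinAt)
        (fun y hy => hderiv y (hsub (Set.Ioo_subset_Icc_self hy)))
      refine ⟨ξ, hsub (Set.Ioo_subset_Icc_self hξ), ?_, ?_⟩
      · rw [abs_of_nonpos (by linarith [hξ.2] : ξ - x ≤ 0),
          abs_of_neg (by linarith : t - x < 0)]
        linarith [hξ.1]
      · have hne' : x - t ≠ 0 := sub_ne_zero.2 (Ne.symm hne)
        rw [eq_div_iff hne'] at hsl
        linarith [hsl]
    · -- x < t
      have hsub : Set.Icc x t ⊆ Set.Icc (0:ℝ) 1 := Set.Icc_subset_Icc hx.1 ht.2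
      obtain ⟨ξ, hξ, hsl⟩ := exists_hasDerivAt_eq_slope f f' hgt
        (fun y hy => ((hderiv y (hsub hy)).continuousAt).continuousWithinAt)
        (fun y hy => hderiv y (hsub (Set.Ioo_subset_Icc_self hy)))
      refine ⟨ξ, hsub (Set.Ioo_subset_Icc_self hξ), ?_, ?_⟩
      · rw [abs_of_nonneg (by linarith [hξ.1] : 0 ≤ ξ - x),
          abs_of_pos (by linarith : 0 < t - x)]
        linarith [hξ.2]
      · have hne' : t - x ≠ 0 := sub_ne_zero.2 hne
        rw [eq_div_iff hne'] at hsl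
        nlinarith [hsl]
  obtain ⟨ξ, hξmem, hξle, hξeq⟩ := hkey
  have h1 : f t - f x - f' x * (t - x) = (f' ξ - f' x) * (t - x) := by rw [hξeq]; ring
  rw [h1, abs_mul]
  have h2 := omega_chain f' hf' hδ hξmem hx
  have h3 : |f' ξ - f' x| ≤ (1 + |t - x| / δ) * modCont f' δ := by
    refine h2.trans ?_
    apply mul_le_mul_of_nonneg_right _ hω
    gcongr
  calc |f' ξ - f' x| * |t - x| ≤ ((1 + |t - x| / δ) * modCont f' δ) * |t - x| :=
        mul_le_mul_of_nonneg_right h3 (abs_nonneg _)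
    _ = (|t - x| + |t - x|^2 / δ) * modCont f' δ := by ring
    _ = (|t - x| + (t - x)^2 / δ) * modCont f' δ := by rw [sq_abs]

/-- estimate for `f ∈ C¹[0,1]` via the modulus of continuity of `f'`, with
`β_n(x) = B_{n,λ}(t-x;x)` and `α_n(x) = B_{n,λ}((t-x)²;x)`. -/
theorem lB_C1_estimate (f f' : ℝ → ℝ)
    (hderiv : ∀ x ∈ Set.Icc (0 : ℝ) 1, HasDerivAt f (f' x) x)
    (hf' : ContinuousOn f' (Set.Icc 0 1))
    (lam : ℝ) (hlam : lam ∈ Set.Icc (-1 : ℝ) 1) (n : ℕ) (hn : 2 ≤ n)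
    (x : ℝ) (hx : x ∈ Set.Icc (0 : ℝ) 1) :
    |lB n lam f x - f x| ≤
      |lB n lam (fun t => t - x) x| * |f' x|
        + 2 * Real.sqrt (lB n lam (fun t => (t - x) ^ 2) x)
          * modCont f' (Real.sqrt (lB n lam (fun t => (t - x) ^ 2) x)) := by
  obtain ⟨hl1, hl2⟩ := hlam
  obtain ⟨hx0, hx1⟩ := hx
  have hnR : (0:ℝ) < (n:ℝ) := by
    have : (2:ℝ) ≤ (n:ℝ) := by exact_mod_cast hn
    linarith
  have hbz : ∀ i ∈ Finset.range (n+1), 0 ≤ bez n lam x i := fun i hi =>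
    bez_nonneg n hn hl1 hl2 hx0 hx1 (by rw [Finset.mem_range] at hi; omega)
  have htmem : ∀ i ∈ Finset.range (n+1), ((i:ℝ)/(n:ℝ)) ∈ Set.Icc (0:ℝ) 1 := by
    intro i hi
    rw [Finset.mem_range] at hi
    have hi' : (i:ℝ) ≤ (n:ℝ) := by exact_mod_cast (by omega : i ≤ n)
    constructor
    · positivity
    · rw [div_le_one hnR]; exact hi'
  have hαe : lB n lam (fun t => (t - x) ^ 2) x
      = ∑ i ∈ Finset.range (n+1), ((i:ℝ)/(n:ℝ) - x)^2 * bez n lam x i := rfl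
  set α := lB n lam (fun t => (t - x) ^ 2) x with hα
  have hα0 : 0 ≤ α := by
    rw [hαe]
    exact Finset.sum_nonneg fun i hi => mul_nonneg (sq_nonneg _) (hbz i hi)
  set δ := Real.sqrt α with hδdef
  have hδ0 : 0 ≤ δ := Real.sqrt_nonneg _
  set R : ℕ → ℝ := fun i => f ((i:ℝ)/(n:ℝ)) - f x - f' x * ((i:ℝ)/(n:ℝ) - x) with hR
  have hdecomp : lB n lam f x - f x = f' x * lB n lam (fun t => t - x) x
      + ∑ i ∈ Finset.range (n+1), R i * bez n lam x i := by
    have hs := sum_bez n hn lam x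
    have hfx : f x = ∑ i ∈ Finset.range (n+1), f x * bez n lam x i := by
      rw [← Finset.mul_sum, hs, mul_one]
    simp only [lB, hR]
    rw [Finset.mul_sum, ← Finset.sum_add_distrib]
    conv_lhs => rw [hfx]
    rw [← Finset.sum_sub_distrib]
    exact Finset.sum_congr rfl fun i _ => by ring
  have hCS : ∑ i ∈ Finset.range (n+1), |(i:ℝ)/(n:ℝ) - x| * bez n lam x i ≤ δ := by
    have hkey := Finset.sum_mul_sq_le_sq_mul_sq (Finset.range (n+1))
      (fun i => |(i:ℝ)/(n:ℝ) - x| * Real.sqrt (bez n lam x i))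
      (fun i => Real.sqrt (bez n lam x i))
    have he1 : ∀ i ∈ Finset.range (n+1),
        (|(i:ℝ)/(n:ℝ) - x| * Real.sqrt (bez n lam x i)) * Real.sqrt (bez n lam x i)
          = |(i:ℝ)/(n:ℝ) - x| * bez n lam x i := by
      intro i hi
      rw [mul_assoc, Real.mul_self_sqrt (hbz i hi)]
    have he2 : ∀ i ∈ Finset.range (n+1),
        (|(i:ℝ)/(n:ℝ) - x| * Real.sqrt (bez n lam x i))^2
          = ((i:ℝ)/(n:ℝ) - x)^2 * bez n lam x i := by
      intro i hi
      rw [mul_pow, Real.sq_sqrt (hbz i hi), sq_abs]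
    have he3 : ∀ i ∈ Finset.range (n+1),
        (Real.sqrt (bez n lam x i))^2 = bez n lam x i := by
      intro i hi
      rw [Real.sq_sqrt (hbz i hi)]
    rw [Finset.sum_congr rfl he1, Finset.sum_congr rfl he2, Finset.sum_congr rfl he3,
      ← hαe, sum_bez n hn lam x, mul_one] at hkey
    have hnn : 0 ≤ ∑ i ∈ Finset.range (n+1), |(i:ℝ)/(n:ℝ) - x| * bez n lam x i :=
      Finset.sum_nonneg fun i hi => mul_nonneg (abs_nonneg _) (hbz i hi)
    rw [hδdef]
    exact (Real.le_sqrt hnn hα0).2 hkey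
  rcases eq_or_lt_of_le hα0 with hαz | hαpos
  · -- α = 0
    have hterms := (Finset.sum_eq_zero_iff_of_nonneg
      (fun i (hi : i ∈ Finset.range (n+1)) => mul_nonneg (sq_nonneg ((i:ℝ)/(n:ℝ) - x)) (hbz i hi))).1
      (by rw [← hαe]; exact hαz.symm)
    have hRz : ∀ i ∈ Finset.range (n+1), R i * bez n lam x i = 0 := by
      intro i hi
      rcases mul_eq_zero.1 (hterms i hi) with h | h
      · have : (i:ℝ)/(n:ℝ) = x := by nlinarith [sq_nonneg ((i:ℝ)/(n:ℝ) - x)]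
        simp [hR, this]
      · rw [h, mul_zero]
    have : lB n lam f x - f x = f' x * lB n lam (fun t => t - x) x := by
      rw [hdecomp, Finset.sum_eq_zero hRz, add_zero]
    have hδz : δ = 0 := by rw [hδdef, ← hαz, Real.sqrt_zero]
    rw [this, abs_mul, hδz, mul_comm]
    simp
  · -- α > 0
    have hδpos : 0 < δ := Real.sqrt_pos.2 hαpos
    have hω := modCont_nonneg f' hf' hδ0
    have hαδ : α = δ^2 := (Real.sq_sqrt hα0).symm
    calc |lB n lam f x - f x|
        = |f' x * lB n lam (fun t => t - x) x + ∑ i ∈ Finset.range (n+1), R i * bez n lam x i| := by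
          rw [hdecomp]
      _ ≤ |f' x * lB n lam (fun t => t - x) x| + |∑ i ∈ Finset.range (n+1), R i * bez n lam x i| :=
          abs_add_le _ _
      _ ≤ |lB n lam (fun t => t - x) x| * |f' x|
            + ∑ i ∈ Finset.range (n+1), |R i| * bez n lam x i := by
          apply add_le_add (le_of_eq (by rw [abs_mul, mul_comm]))
          refine (Finset.abs_sum_le_sum_abs _ _).trans (le_of_eq ?_)
          exact Finset.sum_congr rfl fun i hi => by
            rw [abs_mul, abs_of_nonneg (hbz i hi)]
      _ ≤ |lB n lam (fun t => t - x) x| * |f' x|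
            + ∑ i ∈ Finset.range (n+1),
                ((|(i:ℝ)/(n:ℝ) - x| + ((i:ℝ)/(n:ℝ) - x)^2/δ) * modCont f' δ) * bez n lam x i := by
          apply add_le_add_right
          apply Finset.sum_le_sum
          intro i hi
          exact mul_le_mul_of_nonneg_right
            (taylor_bound f f' hderiv hf' hδpos ⟨hx0, hx1⟩ (htmem i hi)) (hbz i hi)
      _ = |lB n lam (fun t => t - x) x| * |f' x|
            + (modCont f' δ * (∑ i ∈ Finset.range (n+1), |(i:ℝ)/(n:ℝ) - x| * bez n lam x i)
               + (modCont f' δ / δ) * α) := by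
          rw [hαe, Finset.mul_sum, Finset.mul_sum, ← Finset.sum_add_distrib]
          congr 1
          exact Finset.sum_congr rfl fun i hi => by field_simp
      _ ≤ |lB n lam (fun t => t - x) x| * |f' x|
            + (modCont f' δ * δ + (modCont f' δ / δ) * α) := by
          apply add_le_add_right
          apply add_le_add_left
          exact mul_le_mul_of_nonneg_left hCS hω
      _ = |lB n lam (fun t => t - x) x| * |f' x| + 2 * δ * modCont f' δ := by
          rw [hαδ]
          field_simp
          ring
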